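/- For the bidirected path P_n (each edge of the undirected path replaced by arcs in both directions), n ≥ 2, the failed zero forcing number is F(P_n) = ⌈(n−2)/2⌉. -/
import Mathlib


/-- The set of out-neighbors of `v` in the digraph with arc relation `A`. -/
def Nout {V : Type} (A : V → V → Prop) (v : V) : Set V := {w | A v w}

/-- The set of in-neighbors of `v`. -/
def Nin {V : Type} (A : V → V → Prop) (v : V) : Set V := {w | A w v}

/-- One application of the color change rule to the set `S` of filled vertices. -/
def Bstep {V : Type} (A : V → V → Prop) (S : Set V) : Set V :=
  S ∪ {w | ∃ v ∈ S, Nout A v \ S = {w}}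

/-- `S` is a zero forcing set: iterating the color change rule fills all vertices. -/
def IsZFS {V : Type} (A : V → V → Prop) (S : Set V) : Prop :=
  ∃ t, (Bstep A)^[t] S = Set.univ

/-- The failed zero forcing number: the maximum cardinality of a failed zero forcing set. -/
noncomputable def Fnum {V : Type} (A : V → V → Prop) : ℕ :=
  sSup {k | ∃ S : Set V, ¬ IsZFS A S ∧ S.ncard = k}

/-- The zero forcing number: the minimum cardinality of a zero forcing set. -/
noncomputable def Znum {V : Type} (A : V → V → Prop) : ℕ :=
  sInf {k | ∃ S : Set V, IsZFS A S ∧ S.ncard = k}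

/-- `W` is a critical set: `W` is nonempty and no vertex outside `W` has exactly one
out-neighbor in `W`. -/
def IsCritical {V : Type} (A : V → V → Prop) (W : Set V) : Prop :=
  W.Nonempty ∧ ∀ v ∈ Wᶜ, (Nout A v ∩ W).ncard ≠ 1

/-- `D` is a directed cycle: either a single vertex with no arcs, or the vertices can be
cyclically labeled so that the arcs are exactly the consecutive ones. -/
def IsDirectedCycle {V : Type} [Fintype V] (A : V → V → Prop) : Prop :=
  (Fintype.card V = 1 ∧ ∀ u v : V, ¬ A u v) ∨
  (2 ≤ Fintype.card V ∧ ∃ e : ZMod (Fintype.card V) ≃ V,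
      ∀ i j : ZMod (Fintype.card V), A (e i) (e j) ↔ j = i + 1)

def Arel (n : ℕ) : Fin n → Fin n → Prop := fun i j => (i : ℕ) + 1 = j ∨ (j : ℕ) + 1 = i

lemma stalled_of_fixed {n : ℕ} {T : Set (Fin n)} (h : Bstep (Arel n) T = T) :
    ∀ v ∈ T, ∀ w, Nout (Arel n) v \ T ≠ {w} := by
  intro v hv w hw
  have h1 : w ∈ Bstep (Arel n) T := Or.inr ⟨v, hv, hw⟩
  rw [h] at h1
  have h2 : w ∈ Nout (Arel n) v \ T := by rw [hw]; exact rfl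
  exact h2.2 h1

lemma force {n : ℕ} {T : Set (Fin n)}
    (st : ∀ v ∈ T, ∀ w, Nout (Arel n) v \ T ≠ {w})
    {v w : Fin n} (hv : v ∈ T) (hw : w ∉ T) (hnw : Arel n v w) :
    ∃ u, Arel n v u ∧ u ∉ T ∧ u ≠ w := by
  by_contra hcon
  push_neg at hcon
  apply st v hv w
  ext u
  constructor
  · rintro ⟨h1, h2⟩; exact hcon u h1 h2
  · rintro rfl; exact ⟨hnw, hw⟩

lemma rprop {n : ℕ} {T : Set (Fin n)}
    (st : ∀ v ∈ T, ∀ w, Nout (Arel n) v \ T ≠ {w})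
    {a b : Fin n} (hab : (a : ℕ) + 1 = b) (ha : a ∈ T) (hb : b ∈ T) :
    ∀ c : Fin n, (b : ℕ) ≤ c → c ∈ T := by
  suffices H : ∀ m, ∀ c : Fin n, (c : ℕ) = (b : ℕ) + m → c ∈ T by
    intro c hc; exact H ((c : ℕ) - b) c (by omega)
  intro m
  induction m using Nat.strong_induction_on with
  | _ m IH =>
    intro c hc
    have hcn := c.isLt
    rcases Nat.eq_zero_or_pos m with hm | hm
    · have : c = b := Fin.ext (by omega)
      rwa [this]
    · by_contra hcT
      set p : Fin n := ⟨(b : ℕ) + m - 1, by omega⟩ with hp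
      have hpv : (p : ℕ) = (b : ℕ) + m - 1 := rfl
      have hpT : p ∈ T := IH (m - 1) (by omega) p (by omega)
      have hpc : Arel n p c := Or.inl (by omega)
      obtain ⟨u, hu1, hu2, hu3⟩ := force st hpT hcT hpc
      rcases hu1 with h1 | h1
      · exact hu3 (Fin.ext (by omega))
      · by_cases hm1 : m = 1
        · have : u = a := Fin.ext (by omega)
          rw [this] at hu2; exact hu2 ha
        · exact hu2 (IH (m - 2) (by omega) u (by omega))

lemma lprop {n : ℕ} {T : Set (Fin n)}
    (st : ∀ v ∈ T, ∀ w, Nout (Arel n) v \ T ≠ {w})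
    {a b : Fin n} (hab : (a : ℕ) + 1 = b) (ha : a ∈ T) (hb : b ∈ T) :
    ∀ c : Fin n, (c : ℕ) ≤ a → c ∈ T := by
  suffices H : ∀ m, ∀ c : Fin n, (c : ℕ) + m = (a : ℕ) → c ∈ T by
    intro c hc; exact H ((a : ℕ) - c) c (by omega)
  intro m
  induction m using Nat.strong_induction_on with
  | _ m IH =>
    intro c hc
    have hcn := c.isLt
    have han := a.isLt
    rcases Nat.eq_zero_or_pos m with hm | hm
    · have : c = a := Fin.ext (by omega)
      rwa [this]
    · by_contra hcT
      set p : Fin n := ⟨(a : ℕ) - m + 1, by omega⟩ with hp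
      have hpv : (p : ℕ) = (a : ℕ) - m + 1 := rfl
      have hpT : p ∈ T := IH (m - 1) (by omega) p (by omega)
      have hpc : Arel n p c := Or.inr (by omega)
      obtain ⟨u, hu1, hu2, hu3⟩ := force st hpT hcT hpc
      rcases hu1 with h1 | h1
      · by_cases hm1 : m = 1
        · have : u = b := Fin.ext (by omega)
          rw [this] at hu2; exact hu2 hb
        · exact hu2 (IH (m - 2) (by omega) u (by omega))
      · exact hu3 (Fin.ext (by omega))

lemma no_pair {n : ℕ} {T : Set (Fin n)}
    (st : ∀ v ∈ T, ∀ w, Nout (Arel n) v \ T ≠ {w}) (hne : T ≠ Set.univ)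
    {a b : Fin n} (hab : (a : ℕ) + 1 = b) (ha : a ∈ T) (hb : b ∈ T) : False := by
  apply hne
  rw [Set.eq_univ_iff_forall]
  intro c
  rcases le_or_gt (b : ℕ) (c : ℕ) with h | h
  · exact rprop st hab ha hb c h
  · exact lprop st hab ha hb c (by omega)

lemma stalled_bound {n : ℕ} (hn : 2 ≤ n) {T : Set (Fin n)}
    (hfix : Bstep (Arel n) T = T) (hne : T ≠ Set.univ) :
    T.ncard ≤ (n - 1) / 2 := by
  have st := stalled_of_fixed hfix
  -- every member is interior
  have key1 : ∀ v : Fin n, v ∈ T → 1 ≤ (v : ℕ) ∧ (v : ℕ) ≤ n - 2 := by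
    intro v hv
    have hvn := v.isLt
    constructor
    · by_contra h0
      have hv0 : (v : ℕ) = 0 := by omega
      set w : Fin n := ⟨1, by omega⟩ with hwdef
      have hwv : (w : ℕ) = 1 := rfl
      by_cases hw : w ∈ T
      · exact no_pair st hne (a := v) (b := w) (by omega) hv hw
      · obtain ⟨u, hu1, hu2, hu3⟩ := force st hv hw (Or.inl (by omega))
        rcases hu1 with h1 | h1
        · exact hu3 (Fin.ext (by omega))
        · omega
    · by_contra h0
      have hv0 : (v : ℕ) = n - 1 := by omega
      set w : Fin n := ⟨n - 2, by omega⟩ with hwdef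
      have hwv : (w : ℕ) = n - 2 := rfl
      by_cases hw : w ∈ T
      · exact no_pair st hne (a := w) (b := v) (by omega) hw hv
      · obtain ⟨u, hu1, hu2, hu3⟩ := force st hv hw (Or.inr (by omega))
        have hun := u.isLt
        rcases hu1 with h1 | h1
        · omega
        · exact hu3 (Fin.ext (by omega))
  have key2 : ∀ v w : Fin n, v ∈ T → w ∈ T → (v : ℕ) + 1 ≠ (w : ℕ) := by
    intro v w hv hw hvw
    exact no_pair st hne hvw hv hw
  -- counting
  have hinj : Set.InjOn (fun v : Fin n => ((v : ℕ) - 1) / 2) T := by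
    intro x hx y hy hxy
    have h1 := key1 x hx
    have h2 := key1 y hy
    have h3 := key2 x y hx hy
    have h4 := key2 y x hy hx
    simp only at hxy
    exact Fin.ext (by omega)
  have himg : (fun v : Fin n => ((v : ℕ) - 1) / 2) '' T ⊆ Set.Iio ((n - 1) / 2) := by
    rintro k ⟨v, hv, rfl⟩
    have h1 := key1 v hv
    simp only [Set.mem_Iio]
    omega
  calc T.ncard = ((fun v : Fin n => ((v : ℕ) - 1) / 2) '' T).ncard :=
        (Set.ncard_image_of_injOn hinj).symm
    _ ≤ (Set.Iio ((n - 1) / 2)).ncard := Set.ncard_le_ncard himg (Set.finite_Iio _)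
    _ = (n - 1) / 2 := by
        rw [← Finset.coe_range, Set.ncard_coe_finset, Finset.card_range]

lemma subset_bstep {V : Type} (A : V → V → Prop) (S : Set V) : S ⊆ Bstep A S :=
  Set.subset_union_left

lemma subset_iterate {V : Type} (A : V → V → Prop) (S : Set V) (t : ℕ) :
    S ⊆ (Bstep A)^[t] S := by
  induction t with
  | zero => simp
  | succ t IH =>
    rw [Function.iterate_succ_apply']
    exact IH.trans (subset_bstep A _)

lemma growth {n : ℕ} (S : Set (Fin n)) :
    ∀ m, (∀ t < m, (Bstep (Arel n))^[t + 1] S ≠ (Bstep (Arel n))^[t] S) →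
      m ≤ ((Bstep (Arel n))^[m] S).ncard := by
  intro m
  induction m with
  | zero => simp
  | succ m IH =>
    intro h
    have h1 := IH (fun t ht => h t (by omega))
    have h2 : (Bstep (Arel n))^[m] S ⊂ (Bstep (Arel n))^[m + 1] S := by
      refine lt_of_le_of_ne ?_ (Ne.symm (h m (by omega)))
      rw [Function.iterate_succ_apply']
      exact subset_bstep _ _
    have := Set.ncard_lt_ncard h2 (Set.toFinite _)
    omega

lemma failed_le {n : ℕ} (hn : 2 ≤ n) {S : Set (Fin n)} (hS : ¬ IsZFS (Arel n) S) :
    S.ncard ≤ (n - 1) / 2 := by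
  by_cases h : ∃ t, (Bstep (Arel n))^[t + 1] S = (Bstep (Arel n))^[t] S
  · obtain ⟨t, ht⟩ := h
    set T := (Bstep (Arel n))^[t] S with hT
    have hfix : Bstep (Arel n) T = T := by
      rw [hT]
      rw [← Function.iterate_succ_apply' (Bstep (Arel n)) t S]
      exact ht
    have hne : T ≠ Set.univ := fun hu => hS ⟨t, hu⟩
    exact le_trans (Set.ncard_le_ncard (subset_iterate _ _ t) (Set.toFinite _))
      (stalled_bound hn hfix hne)
  · push_neg at h
    exfalso
    apply hS
    refine ⟨n, ?_⟩
    have h1 := growth S n (fun t _ => h t)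
    have h2 : ((Bstep (Arel n))^[n] S).ncard ≤ n := by
      have := Set.ncard_le_ncard (Set.subset_univ ((Bstep (Arel n))^[n] S))
        Set.finite_univ
      rwa [Set.ncard_univ, Nat.card_eq_fintype_card, Fintype.card_fin] at this
    exact Set.eq_of_subset_of_ncard_le (Set.subset_univ _)
      (by rw [Set.ncard_univ, Nat.card_eq_fintype_card, Fintype.card_fin]; omega)
      (Set.toFinite _)

lemma construction {n : ℕ} (hn : 2 ≤ n) :
    ∃ S : Set (Fin n), ¬ IsZFS (Arel n) S ∧ S.ncard = (n - 1) / 2 := by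
  set S0 : Set (Fin n) := {v | (v : ℕ) % 2 = 1 ∧ (v : ℕ) < n - 1} with hS0
  have hfix : Bstep (Arel n) S0 = S0 := by
    unfold Bstep
    rw [Set.union_eq_left]
    rintro w ⟨v, hv, hs⟩
    exfalso
    obtain ⟨hodd, hlt⟩ := hv
    set u : Fin n := ⟨(v : ℕ) - 1, by omega⟩ with hu
    set c : Fin n := ⟨(v : ℕ) + 1, by omega⟩ with hc
    have huv : (u : ℕ) = (v : ℕ) - 1 := rfl
    have hcv : (c : ℕ) = (v : ℕ) + 1 := rfl
    have huD : u ∈ Nout (Arel n) v \ S0 := by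
      refine ⟨Or.inr (by omega), ?_⟩
      intro hmem; exact absurd hmem.1 (by omega)
    have hcD : c ∈ Nout (Arel n) v \ S0 := by
      refine ⟨Or.inl (by omega), ?_⟩
      intro hmem; exact absurd hmem.1 (by omega)
    rw [hs] at huD hcD
    have : u = c := huD.trans hcD.symm
    have := congrArg Fin.val this
    omega
  have hzero : (⟨0, by omega⟩ : Fin n) ∉ S0 := by
    intro hmem
    exact absurd hmem.1 (by norm_num)
  refine ⟨S0, ?_, ?_⟩
  · rintro ⟨t, ht⟩
    rw [Function.iterate_fixed hfix] at ht
    exact hzero (ht ▸ Set.mem_univ _)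
  · have hinj : Set.InjOn (fun v : Fin n => (v : ℕ) / 2) S0 := by
      intro x hx y hy hxy
      have h1 := hx.1
      have h2 := hy.1
      simp only at hxy
      exact Fin.ext (by omega)
    have himg : (fun v : Fin n => (v : ℕ) / 2) '' S0 = Set.Iio ((n - 1) / 2) := by
      ext k
      constructor
      · rintro ⟨v, ⟨hodd, hlt⟩, rfl⟩
        simp only [Set.mem_Iio]
        omega
      · intro hk
        simp only [Set.mem_Iio] at hk
        refine ⟨⟨2 * k + 1, by omega⟩, ⟨?_, ?_⟩, ?_⟩ <;> simp <;> omega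
    calc S0.ncard = ((fun v : Fin n => (v : ℕ) / 2) '' S0).ncard :=
          (Set.ncard_image_of_injOn hinj).symm
      _ = (n - 1) / 2 := by
          rw [himg, ← Finset.coe_range, Set.ncard_coe_finset, Finset.card_range]


theorem stmt_17 (n : ℕ) (hn : 2 ≤ n) :
    Fnum (fun i j : Fin n => (i : ℕ) + 1 = j ∨ (j : ℕ) + 1 = i) =
      (n - 2 + 1) / 2 := by
  have hA : (fun i j : Fin n => (i : ℕ) + 1 = j ∨ (j : ℕ) + 1 = i) = Arel n := rfl
  rw [hA]
  obtain ⟨S0, hS0, hcard⟩ := construction hn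
  have hub : ∀ k ∈ {k | ∃ S : Set (Fin n), ¬ IsZFS (Arel n) S ∧ S.ncard = k},
      k ≤ (n - 1) / 2 := by
    rintro k ⟨S, hS, rfl⟩
    exact failed_le hn hS
  have hmem : (n - 1) / 2 ∈ {k | ∃ S : Set (Fin n), ¬ IsZFS (Arel n) S ∧ S.ncard = k} :=
    ⟨S0, hS0, hcard⟩
  have : Fnum (Arel n) = (n - 1) / 2 := by
    unfold Fnum
    exact le_antisymm (csSup_le ⟨_, hmem⟩ hub) (le_csSup ⟨(n - 1) / 2, hub⟩ hmem)
  rw [this]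
  omega
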